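/- Degenerate case of Theorem 1 (capacity equals the relay-destination capacity): in the half-duplex two-hop relay setting, let C1 := max over PMFs q on X1 of I(q, W1(·|·,0)) and let C2 := max over PMFs q on X2 of I(q, W2), attained at some maximizer q* with P'' := 1 − q*(0). If (1 − P'')·C1 ≥ C2, then sup over joint PMFs p on X1 × X2 of min{ I(X1;Y1|X2), I(X2;Y2) } = C2. -/
import Mathlib


open Finset

/-- Mutual information `I(p, W)` (in bits) of a finite input distribution `p` and a
channel `W`, with the convention that terms with `p a * W a b = 0` contribute `0`. -/
noncomputable def mutInfo {A B : Type*} [Fintype A] [Fintype B]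
    (p : A → ℝ) (W : A → B → ℝ) : ℝ :=
  ∑ a, ∑ b, if p a * W a b = 0 then 0
    else p a * W a b * Real.logb 2 (W a b / ∑ a', p a' * W a' b)

/-- `p` is a probability mass function on the finite type `A`. -/
def IsPMF {A : Type*} [Fintype A] (p : A → ℝ) : Prop :=
  (∀ a, 0 ≤ p a) ∧ ∑ a, p a = 1

/-- The `X2`-marginal of a joint PMF on `X1 × X2`. -/
noncomputable def marg2 {X1 X2 : Type*} [Fintype X1] (p : X1 × X2 → ℝ) : X2 → ℝ :=
  fun x2 => ∑ x1, p (x1, x2)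

/-- The conditional mutual information `I(X1; Y1 | X2)` for a joint PMF `p` on `X1 × X2`
and source-relay channel `W1`. -/
noncomputable def condMI {X1 X2 Y1 : Type*} [Fintype X1] [Fintype X2] [Fintype Y1]
    (p : X1 × X2 → ℝ) (W1 : X1 → X2 → Y1 → ℝ) : ℝ :=
  ∑ x2, if 0 < marg2 p x2 then
      marg2 p x2 * mutInfo (fun x1 => p (x1, x2) / marg2 p x2) (fun x1 => W1 x1 x2)
    else 0


lemma mutInfo_det {A Y : Type*} [Fintype A] [Fintype Y] [DecidableEq Y] (y0 : Y)
    (q : A → ℝ) (hq : ∑ a, q a = 1) :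
    mutInfo q (fun _ y => if y = y0 then (1:ℝ) else 0) = 0 := by
  unfold mutInfo
  apply Finset.sum_eq_zero; intro a _
  apply Finset.sum_eq_zero; intro b _
  by_cases hb : b = y0
  · simp [hb, hq]
  · simp [hb]

lemma marg2_isPMF {X1 X2 : Type*} [Fintype X1] [Fintype X2] (p : X1 × X2 → ℝ)
    (hp : IsPMF p) : IsPMF (marg2 p) := by
  obtain ⟨h0, h1⟩ := hp
  constructor
  · intro x2; exact Finset.sum_nonneg fun x1 _ => h0 _
  · rw [← h1, Fintype.sum_prod_type_right]
    rfl

/-- degenerate case of Theorem 1: let `C1` be the capacity of the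
source-relay channel in reception mode (attained at `q1`) and `C2` the capacity of the
relay-destination channel, attained at a maximizer `q*`, and set `P'' := 1 − q*(0)`.
If `(1 − P'')·C1 ≥ C2`, then the capacity of the two-hop half-duplex relay channel,
`sup_p min{ I(X1;Y1|X2), I(X2;Y2) }`, equals `C2`. -/
theorem capacity_degenerate_case
    {X1 X2 Y1 Y2 : Type*} [Fintype X1] [Fintype X2] [Fintype Y1] [Fintype Y2]
    [DecidableEq Y1]
    (hX2 : 2 ≤ Fintype.card X2) (x0 : X2) (y0 : Y1)
    (W1 : X1 → X2 → Y1 → ℝ) (hW1 : ∀ x1 x2, IsPMF (W1 x1 x2))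
    (hHD : ∀ x1 x2, x2 ≠ x0 → W1 x1 x2 = fun y1 => if y1 = y0 then 1 else 0)
    (W2 : X2 → Y2 → ℝ) (hW2 : ∀ x2, IsPMF (W2 x2))
    (q1 : X1 → ℝ) (hq1 : IsPMF q1)
    (hq1max : ∀ q : X1 → ℝ, IsPMF q →
      mutInfo q (fun x1 => W1 x1 x0) ≤ mutInfo q1 (fun x1 => W1 x1 x0))
    (qstar : X2 → ℝ) (hqstar : IsPMF qstar)
    (hqstarmax : ∀ q : X2 → ℝ, IsPMF q → mutInfo q W2 ≤ mutInfo qstar W2)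
    (hdeg : mutInfo qstar W2 ≤ (1 - (1 - qstar x0)) * mutInfo q1 (fun x1 => W1 x1 x0)) :
    sSup {r : ℝ | ∃ p : X1 × X2 → ℝ, IsPMF p ∧
        r = min (condMI p W1) (mutInfo (marg2 p) W2)} = mutInfo qstar W2 := by
  set C1 := mutInfo q1 (fun x1 => W1 x1 x0) with hC1
  set C2 := mutInfo qstar W2 with hC2
  have hdeg' : C2 ≤ qstar x0 * C1 := by
    have : (1 - (1 - qstar x0)) = qstar x0 := by ring
    rwa [this] at hdeg
  set p : X1 × X2 → ℝ := fun x => q1 x.1 * qstar x.2 with hp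
  have hpPMF : IsPMF p := by
    constructor
    · intro a; exact mul_nonneg (hq1.1 _) (hqstar.1 _)
    · rw [Fintype.sum_prod_type]
      simp only [hp]
      rw [← Finset.sum_mul_sum]
      rw [hq1.2, hqstar.2, one_mul]
  have hmarg : marg2 p = qstar := by
    funext x2
    unfold marg2
    simp only [hp]
    rw [← Finset.sum_mul, hq1.2, one_mul]
  have hcond : condMI p W1 = qstar x0 * C1 := by
    unfold condMI
    rw [hmarg]
    rw [Finset.sum_eq_single x0]
    · by_cases hpos : 0 < qstar x0
      · rw [if_pos hpos]
        congr 1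
        congr 1
        funext x1
        simp only [hp]
        field_simp
      · rw [if_neg hpos]
        have h0 : qstar x0 = 0 := le_antisymm (not_lt.mp hpos) (hqstar.1 _)
        rw [h0, zero_mul]
    · intro x2 _ hne
      by_cases hpos : 0 < qstar x2
      · rw [if_pos hpos]
        have hch : (fun x1 => W1 x1 x2) = (fun _ y => if y = y0 then (1:ℝ) else 0) := by
          funext x1; exact hHD x1 x2 hne
        rw [hch, mutInfo_det y0 _ ?_, mul_zero]
        have : ∑ x1, p (x1, x2) / qstar x2 = (∑ x1, p (x1, x2)) / qstar x2 := by
          rw [Finset.sum_div]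
        rw [this]
        have := congrFun hmarg x2
        unfold marg2 at this
        rw [this, div_self hpos.ne']
      · rw [if_neg hpos]
    · intro h; exact absurd (Finset.mem_univ x0) h
  have hmin : min (condMI p W1) (mutInfo (marg2 p) W2) = C2 := by
    rw [hcond, hmarg]
    exact min_eq_right hdeg'
  have hmem : C2 ∈ {r : ℝ | ∃ p : X1 × X2 → ℝ, IsPMF p ∧
      r = min (condMI p W1) (mutInfo (marg2 p) W2)} := ⟨p, hpPMF, hmin.symm⟩
  have hub : ∀ r ∈ {r : ℝ | ∃ p : X1 × X2 → ℝ, IsPMF p ∧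
      r = min (condMI p W1) (mutInfo (marg2 p) W2)}, r ≤ C2 := by
    rintro r ⟨q, hq, rfl⟩
    exact le_trans (min_le_right _ _) (hqstarmax _ (marg2_isPMF q hq))
  exact le_antisymm (csSup_le ⟨C2, hmem⟩ hub) (le_csSup ⟨C2, hub⟩ hmem)
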